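/- For every finite simple graph G without closed twins, G has an ID-code and the ID-number of G is at most the I-number of G plus one, i.e., γ^ID(G) ≤ γ^I(G) + 1. -/

import Mathlib

open Finset

namespace SepDom

variable {V : Type*} [Fintype V] [DecidableEq V]

/-- The closed neighborhood `N[v]` of a vertex as a `Finset`. -/
def closedNbhd (G : SimpleGraph V) [DecidableRel G.Adj] (v : V) : Finset V :=
  insert v (G.neighborFinset v)

/-- `C` is a dominating set: `N[v] ∩ C ≠ ∅` for all `v`. -/
def IsDomSet (G : SimpleGraph V) [DecidableRel G.Adj] (C : Finset V) : Prop :=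
  ∀ v : V, (closedNbhd G v ∩ C).Nonempty

/-- `C` is a total-dominating set: `N(v) ∩ C ≠ ∅` for all `v`. -/
def IsTotalDomSet (G : SimpleGraph V) [DecidableRel G.Adj] (C : Finset V) : Prop :=
  ∀ v : V, (G.neighborFinset v ∩ C).Nonempty

/-- `C` is a locating set (L-set): the sets `N(v) ∩ C`, `v ∉ C`, are pairwise distinct. -/
def IsLSet (G : SimpleGraph V) [DecidableRel G.Adj] (C : Finset V) : Prop :=
  ∀ u ∉ C, ∀ v ∉ C, G.neighborFinset u ∩ C = G.neighborFinset v ∩ C → u = v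

/-- `C` is an open-separating set (O-set): the sets `N(v) ∩ C` are pairwise distinct. -/
def IsOSet (G : SimpleGraph V) [DecidableRel G.Adj] (C : Finset V) : Prop :=
  ∀ u v : V, G.neighborFinset u ∩ C = G.neighborFinset v ∩ C → u = v

/-- `C` is a closed-separating set (I-set): the sets `N[v] ∩ C` are pairwise distinct. -/
def IsISet (G : SimpleGraph V) [DecidableRel G.Adj] (C : Finset V) : Prop :=
  ∀ u v : V, closedNbhd G u ∩ C = closedNbhd G v ∩ C → u = v

/-- `C` is a full-separating set (F-set): both open- and closed-separating. -/
def IsFSet (G : SimpleGraph V) [DecidableRel G.Adj] (C : Finset V) : Prop :=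
  IsOSet G C ∧ IsISet G C

/-- `G` has open twins: distinct non-adjacent vertices with equal open neighborhoods. -/
def HasOpenTwins (G : SimpleGraph V) [DecidableRel G.Adj] : Prop :=
  ∃ u v : V, u ≠ v ∧ ¬ G.Adj u v ∧ G.neighborFinset u = G.neighborFinset v

/-- `G` has closed twins: distinct adjacent vertices with equal closed neighborhoods. -/
def HasClosedTwins (G : SimpleGraph V) [DecidableRel G.Adj] : Prop :=
  ∃ u v : V, u ≠ v ∧ G.Adj u v ∧ closedNbhd G u = closedNbhd G v

/-- `G` has an isolated vertex: a vertex with empty open neighborhood. -/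
def HasIsolated (G : SimpleGraph V) [DecidableRel G.Adj] : Prop :=
  ∃ v : V, G.neighborFinset v = ∅

/-- The L-number: minimum cardinality of an L-set. -/
noncomputable def lNum (G : SimpleGraph V) [DecidableRel G.Adj] : ℕ :=
  sInf {n | ∃ C : Finset V, IsLSet G C ∧ C.card = n}

/-- The O-number: minimum cardinality of an O-set. -/
noncomputable def oNum (G : SimpleGraph V) [DecidableRel G.Adj] : ℕ :=
  sInf {n | ∃ C : Finset V, IsOSet G C ∧ C.card = n}

/-- The I-number: minimum cardinality of an I-set. -/
noncomputable def iNum (G : SimpleGraph V) [DecidableRel G.Adj] : ℕ :=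
  sInf {n | ∃ C : Finset V, IsISet G C ∧ C.card = n}

/-- The F-number: minimum cardinality of an F-set. -/
noncomputable def fNum (G : SimpleGraph V) [DecidableRel G.Adj] : ℕ :=
  sInf {n | ∃ C : Finset V, IsFSet G C ∧ C.card = n}

/-- The LD-number: minimum cardinality of an LD-code. -/
noncomputable def ldNum (G : SimpleGraph V) [DecidableRel G.Adj] : ℕ :=
  sInf {n | ∃ C : Finset V, IsDomSet G C ∧ IsLSet G C ∧ C.card = n}

/-- The OD-number: minimum cardinality of an OD-code. -/
noncomputable def odNum (G : SimpleGraph V) [DecidableRel G.Adj] : ℕ :=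
  sInf {n | ∃ C : Finset V, IsDomSet G C ∧ IsOSet G C ∧ C.card = n}

/-- The ID-number: minimum cardinality of an ID-code. -/
noncomputable def idNum (G : SimpleGraph V) [DecidableRel G.Adj] : ℕ :=
  sInf {n | ∃ C : Finset V, IsDomSet G C ∧ IsISet G C ∧ C.card = n}

/-- The FD-number: minimum cardinality of an FD-code. -/
noncomputable def fdNum (G : SimpleGraph V) [DecidableRel G.Adj] : ℕ :=
  sInf {n | ∃ C : Finset V, IsDomSet G C ∧ IsFSet G C ∧ C.card = n}

/-- The LTD-number: minimum cardinality of an LTD-code. -/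
noncomputable def ltdNum (G : SimpleGraph V) [DecidableRel G.Adj] : ℕ :=
  sInf {n | ∃ C : Finset V, IsTotalDomSet G C ∧ IsLSet G C ∧ C.card = n}

/-- The OTD-number: minimum cardinality of an OTD-code. -/
noncomputable def otdNum (G : SimpleGraph V) [DecidableRel G.Adj] : ℕ :=
  sInf {n | ∃ C : Finset V, IsTotalDomSet G C ∧ IsOSet G C ∧ C.card = n}

/-- The ITD-number: minimum cardinality of an ITD-code. -/
noncomputable def itdNum (G : SimpleGraph V) [DecidableRel G.Adj] : ℕ :=
  sInf {n | ∃ C : Finset V, IsTotalDomSet G C ∧ IsISet G C ∧ C.card = n}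

/-- The FTD-number: minimum cardinality of an FTD-code. -/
noncomputable def ftdNum (G : SimpleGraph V) [DecidableRel G.Adj] : ℕ :=
  sInf {n | ∃ C : Finset V, IsTotalDomSet G C ∧ IsFSet G C ∧ C.card = n}

end SepDom

open SepDom

theorem id_le_i_add_one {V : Type*} [Fintype V] [DecidableEq V]
    (G : SimpleGraph V) [DecidableRel G.Adj] (hCT : ¬ HasClosedTwins G) :
    (∃ C : Finset V, IsDomSet G C ∧ IsISet G C) ∧ idNum G ≤ iNum G + 1 := by
  classical
  -- univ is an I-set
  have hUniv : IsISet G (Finset.univ : Finset V) := by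
    intro u v h
    simp only [Finset.inter_univ] at h
    by_contra hne
    have hadj : G.Adj u v := by
      have hu : u ∈ closedNbhd G v := by
        rw [← h]; exact Finset.mem_insert_self u _
      rcases Finset.mem_insert.mp hu with h1 | h2
      · exact absurd h1 hne
      · exact (SimpleGraph.mem_neighborFinset _ _ _).mp h2 |>.symm
    exact hCT ⟨u, v, hne, hadj, h⟩
  have hne : {n | ∃ C : Finset V, IsISet G C ∧ C.card = n}.Nonempty :=
    ⟨_, Finset.univ, hUniv, rfl⟩
  obtain ⟨C, hC, hCcard⟩ := Nat.sInf_mem hne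
  -- from any I-set, build an ID-code of size at most card + 1
  have key : ∀ C : Finset V, IsISet G C →
      ∃ D : Finset V, IsDomSet G D ∧ IsISet G D ∧ D.card ≤ C.card + 1 := by
    intro C hC
    by_cases hd : ∀ v : V, (closedNbhd G v ∩ C).Nonempty
    · exact ⟨C, hd, hC, Nat.le_succ _⟩
    · push_neg at hd
      obtain ⟨v, hv⟩ := hd
      refine ⟨insert v C, ?_, ?_, ?_⟩
      · intro u
        by_cases huv : u = v
        · exact ⟨v, Finset.mem_inter.mpr ⟨by rw [huv]; exact Finset.mem_insert_self _ _,
            Finset.mem_insert_self _ _⟩⟩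
        · by_contra hne2
          rw [Finset.not_nonempty_iff_eq_empty] at hne2
          have hempty : closedNbhd G u ∩ C = ∅ := by
            apply Finset.eq_empty_of_forall_notMem
            intro x hx
            have : x ∈ closedNbhd G u ∩ insert v C := by
              rcases Finset.mem_inter.mp hx with ⟨h1, h2⟩
              exact Finset.mem_inter.mpr ⟨h1, Finset.mem_insert_of_mem h2⟩
            simp [hne2] at this
          exact huv (hC u v (by rw [hempty, hv]))
      · intro a b hab
        apply hC
        have h1 : closedNbhd G a ∩ insert v C ∩ C = closedNbhd G b ∩ insert v C ∩ C := by
          rw [hab]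
        rwa [Finset.inter_assoc, Finset.inter_assoc,
          Finset.inter_eq_right.mpr (Finset.subset_insert _ _)] at h1
      · exact (Finset.card_insert_le _ _).trans (by omega)
  obtain ⟨D, hD1, hD2, hD3⟩ := key C hC
  refine ⟨⟨D, hD1, hD2⟩, ?_⟩
  calc idNum G ≤ D.card := Nat.sInf_le ⟨D, hD1, hD2, rfl⟩
    _ ≤ C.card + 1 := hD3
    _ = iNum G + 1 := by rw [hCcard]; rfl
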